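/- Let p be an odd prime, let S' be the ℤ_p-submodule of ℚ_p[[u]] consisting of series ∑_{j≥0} b_j u^{pj}/(pj)! with b_j ∈ ℤ_p, and for l ≥ 1 let 𝓘_l = ∑_{m=1}^{l} p^{l−m} u^{pm} S' ⊆ ℚ_p[[u]]. Let N be the derivation with N(u) = −u. Then N(𝓘_l) ⊆ 𝓘_{l+1} for all l ≥ 1. -/

import Mathlib

open PowerSeries


/-- The set `S'` of power series `∑_{j≥0} b_j u^{pj}/(pj)!` with `b_j ∈ ℤ_p`. -/
def Sprime (p : ℕ) [Fact p.Prime] : Set (PowerSeries ℚ_[p]) :=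
  {z | ∃ b : ℕ → ℤ_[p], ∀ n : ℕ,
    PowerSeries.coeff (R := ℚ_[p]) n z =
      if p ∣ n then ((b (n / p) : ℚ_[p]) / (Nat.factorial n : ℚ_[p])) else 0}

/-- The submodule `𝓘_l = ∑_{m=1}^{l} p^{l−m} u^{pm} S'` of `ℚ_p[[u]]`,
described as a set. -/
noncomputable def Ideall (p : ℕ) [Fact p.Prime] (l : ℕ) : Set (PowerSeries ℚ_[p]) :=
  {y | ∃ z : ℕ → PowerSeries ℚ_[p], (∀ m, z m ∈ Sprime p) ∧
    y = ∑ m ∈ Finset.Icc 1 l,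
      PowerSeries.C (R := ℚ_[p]) ((p : ℚ_[p]) ^ (l - m)) * PowerSeries.X ^ (p * m) * z m}

/-- The derivation `N` of `ℚ_p[[u]]` with `N(u) = -u`. -/
noncomputable def Nder (p : ℕ) [Fact p.Prime] (z : PowerSeries ℚ_[p]) : PowerSeries ℚ_[p] :=
  PowerSeries.mk fun n => -(n : ℚ_[p]) * PowerSeries.coeff (R := ℚ_[p]) n z

lemma Nder_sum (p : ℕ) [Fact p.Prime] (s : Finset ℕ) (f : ℕ → PowerSeries ℚ_[p]) :
    Nder p (∑ m ∈ s, f m) = ∑ m ∈ s, Nder p (f m) := by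
  ext n
  simp [Nder, coeff_mk, map_sum, Finset.mul_sum]

lemma Nder_key (p : ℕ) [Fact p.Prime] (a : ℚ_[p]) (k : ℕ) (z : PowerSeries ℚ_[p]) :
    Nder p (PowerSeries.C (R := ℚ_[p]) a * PowerSeries.X ^ k * z) =
      PowerSeries.C (R := ℚ_[p]) a * PowerSeries.X ^ k *
        (PowerSeries.C (R := ℚ_[p]) (-(k : ℚ_[p])) * z + Nder p z) := by
  ext n
  simp only [Nder, coeff_mk, mul_assoc, coeff_C_mul, coeff_X_pow_mul', map_add, mul_add]
  split_ifs with h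
  · have : (n : ℚ_[p]) = (k : ℚ_[p]) + ((n - k : ℕ) : ℚ_[p]) := by
      push_cast [Nat.cast_sub h]; ring
    rw [this]; ring
  · ring

lemma Sprime_zero (p : ℕ) [Fact p.Prime] : (0 : PowerSeries ℚ_[p]) ∈ Sprime p :=
  ⟨0, fun n => by simp⟩

lemma Nder_Sprime (p : ℕ) [Fact p.Prime] {z : PowerSeries ℚ_[p]} (hz : z ∈ Sprime p) :
    ∃ z' ∈ Sprime p, Nder p z = PowerSeries.C (R := ℚ_[p]) (p : ℚ_[p]) * z' := by
  obtain ⟨b, hb⟩ := hz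
  refine ⟨PowerSeries.mk fun n => if p ∣ n then
      (((-(n / p : ℕ) * b (n / p) : ℤ_[p]) : ℚ_[p]) / (Nat.factorial n : ℚ_[p])) else 0,
    ⟨fun j => -(j : ℤ_[p]) * b j, fun n => by simp [coeff_mk]⟩, ?_⟩
  ext n
  simp only [Nder, coeff_mk, coeff_C_mul, hb]
  split_ifs with h
  · have hn : ((n / p : ℕ) : ℚ_[p]) * (p : ℚ_[p]) = (n : ℚ_[p]) := by
      rw [← Nat.cast_mul, Nat.div_mul_cancel h]
    push_cast
    rw [← hn]
    ring
  · simp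

lemma Sprime_comb (p : ℕ) [Fact p.Prime] {z w : PowerSeries ℚ_[p]} (hz : z ∈ Sprime p)
    (hw : w ∈ Sprime p) (m : ℕ) :
    PowerSeries.C (R := ℚ_[p]) (-(m : ℚ_[p])) * z + w ∈ Sprime p := by
  obtain ⟨b, hb⟩ := hz
  obtain ⟨c, hc⟩ := hw
  refine ⟨fun j => -(m : ℤ_[p]) * b j + c j, fun n => ?_⟩
  simp only [map_add, coeff_C_mul, hb, hc]
  split_ifs with h
  · push_cast; ring
  · simp

theorem stmt13 (p : ℕ) [Fact p.Prime] (hodd : p ≠ 2)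
    (l : ℕ) (hl : 1 ≤ l)
    (y : PowerSeries ℚ_[p]) (hy : y ∈ Ideall p l) :
    Nder p y ∈ Ideall p (l + 1) := by
  obtain ⟨z, hzS, rfl⟩ := hy
  choose z' hz'S hz'eq using fun m => Nder_Sprime p (hzS m)
  set w : ℕ → PowerSeries ℚ_[p] :=
    fun m => PowerSeries.C (R := ℚ_[p]) (-(m : ℚ_[p])) * z m + z' m with hw
  refine ⟨fun m => if m ≤ l then w m else 0, fun m => ?_, ?_⟩
  · by_cases hm : m ≤ l
    · simp only []; rw [if_pos hm]; exact Sprime_comb p (hzS m) (hz'S m) m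
    · simp only []; rw [if_neg hm]; exact Sprime_zero p
  · rw [Nder_sum, Finset.sum_Icc_succ_top (by omega : 1 ≤ l + 1)]
    have : ¬ (l + 1 ≤ l) := by omega
    simp only [this, if_false, mul_zero, add_zero]
    refine Finset.sum_congr rfl fun m hm => ?_
    have hml : m ≤ l := (Finset.mem_Icc.mp hm).2
    rw [if_pos hml, Nder_key, hz'eq]
    have h1 : l + 1 - m = (l - m) + 1 := by omega
    have h2 : (-(↑(p * m) : ℚ_[p])) = (p : ℚ_[p]) * (-(m : ℚ_[p])) := by push_cast; ring
    rw [h1, h2, pow_succ, map_mul, map_mul]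
    ring
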